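/- Let ℓ ≥ 2 and d ≥ 3 be integers and set b = ⌊(d-2)/ℓ⌋. Then C((b+1)ℓ+1, d-1) + C((b+2)ℓ, d-1) ≥ C(ℓ+d-1, d-1) + d·C((b+1)ℓ, d-1), where C(n,m) denotes the binomial coefficient. -/

import Mathlib

/-- Repeated Pascal: `C(k+r+l, k) ≥ C(k+l, k) + r·C(k+l, k-1)`. -/
lemma stmt0_lemA (k l r : ℕ) (hk : 1 ≤ k) :
    Nat.choose (k + l) k + r * Nat.choose (k + l) (k - 1) ≤ Nat.choose (k + r + l) k := by
  induction r with
  | zero => simp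
  | succ r ih =>
    obtain ⟨m, rfl⟩ : ∃ m, k = m + 1 := ⟨k - 1, by omega⟩
    have h1 : Nat.choose (m + 1 + (r + 1) + l) (m + 1)
        = Nat.choose (m + 1 + r + l) m + Nat.choose (m + 1 + r + l) (m + 1) := by
      have h2 : m + 1 + (r + 1) + l = (m + 1 + r + l) + 1 := by ring
      rw [h2, Nat.choose_succ_succ]
    have h3 : Nat.choose (m + 1 + l) (m + 1 - 1) ≤ Nat.choose (m + 1 + r + l) m := by
      simpa using Nat.choose_le_choose m (show m + 1 + l ≤ m + 1 + r + l by omega)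
    have h5 : (r + 1) * Nat.choose (m + 1 + l) (m + 1 - 1)
        = r * Nat.choose (m + 1 + l) (m + 1 - 1) + Nat.choose (m + 1 + l) (m + 1 - 1) := by ring
    simp only [Nat.add_sub_cancel] at *
    omega

/-- Key inequality: for `k ≥ 2`, `r + 1 ≤ l`:
`C(l+k,k) + (k+1)·C(k+r,k) ≤ C(k+r+1,k) + C(k+r+l,k)`. -/
lemma stmt0_key (k l r : ℕ) (hk : 2 ≤ k) (hr : r + 1 ≤ l) :
    Nat.choose (l + k) k + (k + 1) * Nat.choose (k + r) k ≤
      Nat.choose (k + r + 1) k + Nat.choose (k + r + l) k := by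
  set X := Nat.choose (k + r) k with hX
  set A := Nat.choose (k + r + 1) k with hA
  set B := Nat.choose (k + l) (k - 1) with hB
  -- symmetry facts
  have hXs : X = Nat.choose (k + r) r := by
    rw [hX, ← Nat.choose_symm (by omega : k ≤ k + r)]
    congr 1; omega
  have hAs : A = Nat.choose (k + r + 1) (r + 1) := by
    rw [hA, ← Nat.choose_symm (by omega : k ≤ k + r + 1)]
    congr 1; omega
  -- h4 : C(k+r+1, r+1) * (r+1) = (k+r+1) * C(k+r, r)
  have h4 : Nat.choose (k + r + 1) (r + 1) * (r + 1) = (k + r + 1) * Nat.choose (k + r) r := by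
    have h := Nat.add_one_mul_choose_eq (k + r) r
    exact h.symm
  -- step B : k * X ≤ (r+1) * B
  have hBstep : k * X ≤ (r + 1) * B := by
    have h1 : Nat.choose (k + r + 1) (k - 1) ≤ B :=
      Nat.choose_le_choose _ (by omega)
    have h2 : Nat.choose (k + r + 1) (k - 1) = Nat.choose (k + r + 1) (r + 2) := by
      rw [← Nat.choose_symm (show r + 2 ≤ k + r + 1 by omega)]
      congr 1; omega
    have h3 : Nat.choose (k + r + 1) (r + 2) * (r + 2) = Nat.choose (k + r + 1) (r + 1) * k := by
      rw [Nat.choose_succ_right_eq (k + r + 1) (r + 1)]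
      congr 1; omega
    -- (r+2) * (k * X) ≤ (r+2) * ((r+1) * B)
    have hmul : (r + 2) * (k * X) ≤ (r + 2) * ((r + 1) * B) := by
      calc (r + 2) * (k * X) = k * ((r + 2) * X) := by ring
        _ ≤ k * ((k + r + 1) * X) := by
            exact Nat.mul_le_mul_left k (Nat.mul_le_mul_right X (by omega))
        _ = k * ((k + r + 1) * Nat.choose (k + r) r) := by rw [← hXs]
        _ = k * (Nat.choose (k + r + 1) (r + 1) * (r + 1)) := by rw [h4]
        _ = (r + 1) * (Nat.choose (k + r + 1) (r + 2) * (r + 2)) := by rw [h3]; ring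
        _ = (r + 2) * ((r + 1) * Nat.choose (k + r + 1) (r + 2)) := by ring
        _ ≤ (r + 2) * ((r + 1) * B) := by
            rw [← h2] at *
            exact Nat.mul_le_mul_left _ (Nat.mul_le_mul_left _ h1)
    exact Nat.le_of_mul_le_mul_left hmul (by omega)
  -- main step: (k+1) * X ≤ A + r * B
  have hmain : (k + 1) * X ≤ A + r * B := by
    have hAeq : (r + 1) * A = (k + r + 1) * X := by
      rw [hAs, hXs, Nat.mul_comm (r+1), h4]
    have hmul : (r + 1) * ((k + 1) * X) ≤ (r + 1) * (A + r * B) := by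
      have e1 : (r + 1) * ((k + 1) * X) = (k + r + 1) * X + r * (k * X) := by ring
      have e2 : (r + 1) * (A + r * B) = (r + 1) * A + r * ((r + 1) * B) := by ring
      have : r * (k * X) ≤ r * ((r + 1) * B) := Nat.mul_le_mul_left r hBstep
      omega
    exact Nat.le_of_mul_le_mul_left hmul (by omega)
  -- Pascal sum bound
  have hAsum : Nat.choose (k + l) k + r * B ≤ Nat.choose (k + r + l) k :=
    stmt0_lemA k l r (by omega)
  have hcomm : Nat.choose (l + k) k = Nat.choose (k + l) k := by rw [Nat.add_comm]
  omega

theorem stmt0 (ℓ d b : ℕ) (hl : 2 ≤ ℓ) (hd : 3 ≤ d) (hb : b = (d - 2) / ℓ) :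
    Nat.choose (ℓ + d - 1) (d - 1) + d * Nat.choose ((b + 1) * ℓ) (d - 1) ≤
      Nat.choose ((b + 1) * ℓ + 1) (d - 1) + Nat.choose ((b + 2) * ℓ) (d - 1) := by
  obtain ⟨k, rfl⟩ : ∃ k, d = k + 1 := ⟨d - 1, by omega⟩
  have hk : 2 ≤ k := by omega
  -- bounds on N = (b+1)*ℓ
  have hub : b * ℓ ≤ k - 1 := by
    rw [hb]; simpa using Nat.div_mul_le_self (k + 1 - 2) ℓ
  have hlb : k - 1 < (b + 1) * ℓ := by
    rw [hb]
    have := Nat.lt_mul_div_succ (k + 1 - 2) (show 0 < ℓ by omega)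
    simpa [Nat.mul_comm] using this
  set r := (b + 1) * ℓ - k with hrdef
  have hN : (b + 1) * ℓ = k + r := by
    have : k ≤ (b + 1) * ℓ := by omega
    omega
  have hr : r + 1 ≤ ℓ := by
    have h1 : (b + 1) * ℓ ≤ k - 1 + ℓ := by
      have : (b + 1) * ℓ = b * ℓ + ℓ := by ring
      omega
    omega
  have hN2 : (b + 2) * ℓ = k + r + ℓ := by
    have : (b + 2) * ℓ = (b + 1) * ℓ + ℓ := by ring
    omega
  have e1 : ℓ + (k + 1) - 1 = ℓ + k := by omega
  have e2 : k + 1 - 1 = k := by omega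
  rw [e1, e2, hN, hN2]
  exact stmt0_key k ℓ r hk hr
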